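/- Let T be a positively edge-weighted phylogenetic X-tree with |X| = n, let 2 ≤ m ≤ n, let D be the m-subtree weight map of T, and let S_D(i,j) = Σ D({i,j} ∪ Y), the sum over all (m−2)-element subsets Y of X \ {i,j}, with S_D(i,i) = 0. Then S_D satisfies the four-point condition: for all i, j, k, l ∈ X, S_D(i,j) + S_D(k,l) ≤ max(S_D(i,k) + S_D(j,l), S_D(j,k) + S_D(i,l)). -/

import Mathlib

open SimpleGraph Finset

attribute [local instance] Classical.propDecidable

noncomputable section

/-- `e` lies on some path (hence on the unique path, in a tree) from `a` to `b`. -/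
def OnPath {V : Type*} (G : SimpleGraph V) (a b : V) (e : Sym2 V) : Prop :=
  ∃ p : G.Walk a b, p.IsPath ∧ e ∈ p.edges

/-- The edge set `[R]` of the smallest subtree of a tree `G` spanning `R`. -/
def subtreeEdges {V : Type*} [Fintype V] (G : SimpleGraph V) (R : Finset V) :
    Finset (Sym2 V) :=
  G.edgeFinset.filter fun e => ∃ a ∈ R, ∃ b ∈ R, OnPath G a b e

/-- The subtree weight `D(R) = ∑_{e ∈ [R]} w(e)`. -/
def subtreeWeight {V : Type*} [Fintype V] (G : SimpleGraph V) (w : Sym2 V → ℝ)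
    (R : Finset V) : ℝ :=
  ∑ e ∈ subtreeEdges G R, w e

/-- `L_i(e)`: the set of leaves in the component of `T - e` containing `i`. -/
def leafSide {V : Type*} [Fintype V] (G : SimpleGraph V) (X : Finset V)
    (i : V) (e : Sym2 V) : Finset V :=
  X.filter fun x => (G.deleteEdges {e}).Reachable i x

/-- `S_D(i,j) = ∑_{Y ∈ C(X \ {i,j}, m-2)} D({i,j} ∪ Y)`. -/
def SDmap {V : Type*} [Fintype V] (G : SimpleGraph V) (w : Sym2 V → ℝ)
    (X : Finset V) (m : ℕ) (i j : V) : ℝ :=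
  ∑ Y ∈ ((X.erase i).erase j).powersetCard (m - 2),
    subtreeWeight G w (insert i (insert j Y))

/-- Binomial coefficient with integer arguments, `0` whenever `b < 0` or `a < b`. -/
def C (a b : ℤ) : ℤ := if 0 ≤ b ∧ b ≤ a then (a.toNat.choose b.toNat : ℤ) else 0

/-- `(i,j;k,l)` is a tree quartet: the (unique) path from `i` to `j` and the (unique) path
from `k` to `l` share no edges. -/
def IsQuartet {V : Type*} (G : SimpleGraph V) (i j k l : V) : Prop :=
  ∀ (p : G.Walk i j) (q : G.Walk k l), p.IsPath → q.IsPath →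
    ∀ e ∈ p.edges, e ∉ q.edges

namespace SD4P

variable {V : Type*}

lemma walk_split {G : SimpleGraph V} {u v : V} : ∀ {a b : V} (p : G.Walk a b),
    p.IsPath → s(u,v) ∈ p.edges →
    ((G.deleteEdges {s(u,v)}).Reachable a u ∧ (G.deleteEdges {s(u,v)}).Reachable v b) ∨
    ((G.deleteEdges {s(u,v)}).Reachable a v ∧ (G.deleteEdges {s(u,v)}).Reachable u b) := by
  intro a b p
  induction p with
  | nil => intro _ he; simp at he
  | @cons a c b h q ih =>
    intro hp he
    have hnd : s(a,c) ∉ q.edges := by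
      have := hp.isTrail.edges_nodup
      rw [Walk.edges_cons, List.nodup_cons] at this
      exact this.1
    rw [Walk.edges_cons, List.mem_cons] at he
    rcases he with he | he
    · have hq' : ∀ f ∈ q.edges, f ∉ ({s(u,v)} : Set (Sym2 V)) := by
        intro f hf hf'
        rw [Set.mem_singleton_iff] at hf'
        subst hf'
        rw [he] at hf
        exact hnd hf
      have hr : (G.deleteEdges {s(u,v)}).Reachable c b := ⟨q.toDeleteEdges _ hq'⟩
      rcases Sym2.eq_iff.mp he with ⟨rfl, rfl⟩ | ⟨rfl, rfl⟩
      · exact Or.inl ⟨Reachable.refl _, hr⟩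
      · exact Or.inr ⟨Reachable.refl _, hr⟩
    · have hne : s(a,c) ≠ s(u,v) := fun hh => hnd (hh ▸ he)
      have hadj : (G.deleteEdges {s(u,v)}).Adj a c := by
        rw [SimpleGraph.deleteEdges_adj]
        exact ⟨h, by simpa using hne⟩
      rcases ih hp.of_cons he with ⟨h1, h2⟩ | ⟨h1, h2⟩
      · exact Or.inl ⟨hadj.reachable.trans h1, h2⟩
      · exact Or.inr ⟨hadj.reachable.trans h1, h2⟩

lemma reach_uv {G : SimpleGraph V} (hc : G.Connected) {u v : V} (h : G.Adj u v) (z : V) :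
    (G.deleteEdges {s(u,v)}).Reachable z u ∨ (G.deleteEdges {s(u,v)}).Reachable z v := by
  obtain ⟨w⟩ := hc.preconnected z u
  by_cases hw : s(u,v) ∈ w.bypass.edges
  · rcases walk_split w.bypass w.bypass_isPath hw with ⟨h1, _⟩ | ⟨h1, _⟩
    · exact Or.inl h1
    · exact Or.inr h1
  · exact Or.inl ⟨w.bypass.toDeleteEdges _ (fun f hf hf' => hw ((Set.mem_singleton_iff.mp hf') ▸ hf))⟩

lemma two_comp {G : SimpleGraph V} (hc : G.Connected) {e : Sym2 V} (he : e ∈ G.edgeSet)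
    {p q : V} (hpq : ¬ (G.deleteEdges {e}).Reachable p q) (z : V) :
    (G.deleteEdges {e}).Reachable z p ∨ (G.deleteEdges {e}).Reachable z q := by
  revert he hpq
  induction e using Sym2.ind with
  | _ u v =>
    intro he hpq
    rw [SimpleGraph.mem_edgeSet] at he
    have hz := reach_uv hc he z
    have hp := reach_uv hc he p
    have hq := reach_uv hc he q
    rcases hp with hp | hp
    · rcases hz with hz | hz
      · exact Or.inl (hz.trans hp.symm)
      · rcases hq with hq | hq
        · exact absurd (hp.trans hq.symm) hpq
        · exact Or.inr (hz.trans hq.symm)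
    · rcases hz with hz | hz
      · rcases hq with hq | hq
        · exact Or.inr (hz.trans hq.symm)
        · exact absurd (hp.trans hq.symm) hpq
      · exact Or.inl (hz.trans hp.symm)

lemma tree_bridge {G : SimpleGraph V} (hT : G.IsTree) {u v : V} (h : G.Adj u v) :
    ¬ (G.deleteEdges {s(u,v)}).Reachable u v := by
  have hb := (isAcyclic_iff_forall_adj_isBridge.mp hT.IsAcyclic) h
  rw [isBridge_iff] at hb
  exact hb

lemma onPath_iff {G : SimpleGraph V} (hT : G.IsTree) {a b : V} {e : Sym2 V}
    (he : e ∈ G.edgeSet) :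
    OnPath G a b e ↔ ¬ (G.deleteEdges {e}).Reachable a b := by
  revert he
  induction e using Sym2.ind with
  | _ u v =>
    intro he
    rw [SimpleGraph.mem_edgeSet] at he
    constructor
    · rintro ⟨p, hp, hep⟩ hreach
      rcases walk_split p hp hep with ⟨h1, h2⟩ | ⟨h1, h2⟩
      · exact tree_bridge hT he (h1.symm.trans (hreach.trans h2.symm))
      · exact tree_bridge hT he (h2.trans (hreach.symm.trans h1))
    · intro hreach
      obtain ⟨w⟩ := hT.isConnected.preconnected a b
      by_cases hw : s(u,v) ∈ w.bypass.edges
      · exact ⟨w.bypass, w.bypass_isPath, hw⟩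
      · exact absurd ⟨w.bypass.toDeleteEdges _
          (fun f hf hf' => hw ((Set.mem_singleton_iff.mp hf') ▸ hf))⟩ hreach

lemma reach_transfer {G : SimpleGraph V} {e : Sym2 V} {x y v v' : V}
    (hxy : (G.deleteEdges {e}).Reachable x y)
    (hv : ¬ (G.deleteEdges {e}).Reachable x v) :
    (G.deleteEdges {s(v,v')}).Reachable x y := by
  obtain ⟨w⟩ := hxy
  have hfp : s(v,v') ∉ w.bypass.edges := by
    intro hmem
    exact hv ⟨w.bypass.takeUntil v (w.bypass.fst_mem_support_of_mem_edges hmem)⟩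
  have hr : ((G.deleteEdges {e}).deleteEdges {s(v,v')}).Reachable x y :=
    ⟨w.bypass.toDeleteEdges _ (fun f hf hf' => hfp ((Set.mem_singleton_iff.mp hf') ▸ hf))⟩
  exact hr.mono (SimpleGraph.deleteEdges_mono (G.deleteEdges_le _))

lemma incompat {G : SimpleGraph V} (hT : G.IsTree) {e f : Sym2 V}
    (he : e ∈ G.edgeSet) (hf : f ∈ G.edgeSet) {i j k l : V}
    (h2 : ¬(G.deleteEdges {e}).Reachable i j ∧ (G.deleteEdges {e}).Reachable i k ∧
      (G.deleteEdges {e}).Reachable j l)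
    (h3 : ¬(G.deleteEdges {f}).Reachable i j ∧ (G.deleteEdges {f}).Reachable i l ∧
      (G.deleteEdges {f}).Reachable j k) : False := by
  by_cases hef : e = f
  · subst hef
    exact h2.1 (h3.2.1.trans h2.2.2.symm)
  · revert hf h3 hef
    induction f using Sym2.ind with
    | _ v v' =>
      intro hf h3 hef
      rw [SimpleGraph.mem_edgeSet] at hf
      have hvv' : (G.deleteEdges {e}).Adj v v' := by
        rw [SimpleGraph.deleteEdges_adj]
        exact ⟨hf, fun hmem => hef (Set.mem_singleton_iff.mp hmem).symm⟩
      rcases two_comp hT.isConnected he h2.1 v with hvi | hvj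
      · have hv'i : (G.deleteEdges {e}).Reachable v' i := hvv'.symm.reachable.trans hvi
        have hjl' : (G.deleteEdges {s(v,v')}).Reachable j l :=
          reach_transfer h2.2.2 (fun hjv => h2.1 (hjv.trans hvi).symm)
        exact h3.1 (h3.2.1.trans hjl'.symm)
      · have hik' : (G.deleteEdges {s(v,v')}).Reachable i k :=
          reach_transfer h2.2.1 (fun hiv => h2.1 (hiv.trans hvj))
        exact h3.1 (hik'.trans h3.2.2.symm)

section WithFintype

variable [Fintype V]

/-- `C(|L_x(e)|-2, m-2)` as a real number. -/
def ccf (G : SimpleGraph V) (X : Finset V) (m : ℕ) (x : V) (e : Sym2 V) : ℝ :=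
  (((leafSide G X x e).card - 2).choose (m - 2) : ℝ)

def deltaf (G : SimpleGraph V) (X : Finset V) (m : ℕ) (x y : V) (e : Sym2 V) : ℝ :=
  if (G.deleteEdges {e}).Reachable x y then 0 else (ccf G X m x e + ccf G X m y e) / 2

def phif (G : SimpleGraph V) (X : Finset V) (w : Sym2 V → ℝ) (m : ℕ) (x : V) : ℝ :=
  ∑ e ∈ G.edgeFinset, w e * ((((X.card - 2).choose (m - 2) : ℝ) - ccf G X m x e) / 2)

def ddf (G : SimpleGraph V) (X : Finset V) (w : Sym2 V → ℝ) (m : ℕ) (x y : V) : ℝ :=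
  ∑ e ∈ G.edgeFinset, w e * deltaf G X m x y e

variable {G : SimpleGraph V} {X : Finset V} {m : ℕ}

lemma ccf_nonneg (X m) (x : V) (e : Sym2 V) : 0 ≤ ccf G X m x e := by
  simp only [ccf]; positivity

lemma ccf_le (X m) (x : V) (e : Sym2 V) :
    ccf G X m x e ≤ ((X.card - 2).choose (m - 2) : ℝ) := by
  simp only [ccf]
  exact_mod_cast Nat.choose_le_choose _
    (Nat.sub_le_sub_right (Finset.card_le_card (Finset.filter_subset _ _)) 2)

lemma ccf_congr {x y : V} {e : Sym2 V}
    (h : (G.deleteEdges {e}).Reachable x y) : ccf G X m x e = ccf G X m y e := by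
  have hls : leafSide G X x e = leafSide G X y e := by
    simp only [leafSide]
    exact Finset.filter_congr fun z _ => ⟨fun hz => h.symm.trans hz, fun hz => h.trans hz⟩
  simp only [ccf, hls]

lemma deltaf_nonneg (x y : V) (e : Sym2 V) : 0 ≤ deltaf G X m x y e := by
  simp only [deltaf]
  split
  · exact le_refl _
  · have := ccf_nonneg (G := G) X m x e
    have := ccf_nonneg (G := G) X m y e
    linarith

lemma deltaf_comm (x y : V) (e : Sym2 V) : deltaf G X m x y e = deltaf G X m y x e := by
  simp only [deltaf]
  by_cases h : (G.deleteEdges {e}).Reachable x y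
  · rw [if_pos h, if_pos h.symm]
  · rw [if_neg h, if_neg (fun hh => h hh.symm)]; ring

lemma deltaf_triangle (x y z : V) (e : Sym2 V) :
    deltaf G X m x z e ≤ deltaf G X m x y e + deltaf G X m y z e := by
  have hnxy := ccf_nonneg (G := G) X m x e
  have hnyy := ccf_nonneg (G := G) X m y e
  have hnzz := ccf_nonneg (G := G) X m z e
  simp only [deltaf]
  by_cases hxz : (G.deleteEdges {e}).Reachable x z
  · rw [if_pos hxz]
    have h1 := deltaf_nonneg (G := G) (X := X) (m := m) x y e
    have h2 := deltaf_nonneg (G := G) (X := X) (m := m) y z e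
    simp only [deltaf] at h1 h2
    linarith
  · rw [if_neg hxz]
    by_cases hxy : (G.deleteEdges {e}).Reachable x y
    · have hyz : ¬ (G.deleteEdges {e}).Reachable y z := fun h => hxz (hxy.trans h)
      rw [if_pos hxy, if_neg hyz, ccf_congr hxy]
      linarith
    · by_cases hyz : (G.deleteEdges {e}).Reachable y z
      · rw [if_neg hxy, if_pos hyz, ccf_congr hyz]
        linarith
      · rw [if_neg hxy, if_neg hyz]
        linarith

lemma claimA (hc : G.Connected) {e : Sym2 V} (he : e ∈ G.edgeSet) (i j k l : V)
    (h : ¬(¬(G.deleteEdges {e}).Reachable i j ∧ (G.deleteEdges {e}).Reachable i k ∧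
      (G.deleteEdges {e}).Reachable j l)) :
    deltaf G X m i j e + deltaf G X m k l e ≤ deltaf G X m i k e + deltaf G X m j l e := by
  have hni := ccf_nonneg (G := G) X m i e
  have hnj := ccf_nonneg (G := G) X m j e
  have hnk := ccf_nonneg (G := G) X m k e
  have hnl := ccf_nonneg (G := G) X m l e
  simp only [deltaf]
  by_cases hij : (G.deleteEdges {e}).Reachable i j
  · rw [if_pos hij]
    by_cases hkl : (G.deleteEdges {e}).Reachable k l
    · rw [if_pos hkl]
      have h1 := deltaf_nonneg (G := G) (X := X) (m := m) i k e
      have h2 := deltaf_nonneg (G := G) (X := X) (m := m) j l e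
      simp only [deltaf] at h1 h2
      linarith
    · rw [if_neg hkl]
      by_cases hik : (G.deleteEdges {e}).Reachable i k
      · have hjl : ¬ (G.deleteEdges {e}).Reachable j l :=
          fun hjl => hkl ((hik.symm.trans hij).trans hjl)
        rw [if_pos hik, if_neg hjl]
        have e1 : ccf G X m i e = ccf G X m k e := ccf_congr hik
        have e2 : ccf G X m i e = ccf G X m j e := ccf_congr hij
        linarith
      · rw [if_neg hik]
        by_cases hjl : (G.deleteEdges {e}).Reachable j l
        · rw [if_pos hjl]
          have e1 : ccf G X m l e = ccf G X m j e := (ccf_congr hjl).symm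
          have e2 : ccf G X m j e = ccf G X m i e := (ccf_congr hij).symm
          linarith
        · rw [if_neg hjl]
          have e2 : ccf G X m i e = ccf G X m j e := ccf_congr hij
          linarith
  · rw [if_neg hij]
    by_cases hik : (G.deleteEdges {e}).Reachable i k
    · have hjl : ¬(G.deleteEdges {e}).Reachable j l := fun hjl => h ⟨hij, hik, hjl⟩
      rcases two_comp hc he hij l with hli | hlj
      · have hkl : (G.deleteEdges {e}).Reachable k l := hik.symm.trans hli.symm
        rw [if_pos hkl, if_pos hik, if_neg hjl]
        have e1 : ccf G X m l e = ccf G X m i e := ccf_congr hli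
        linarith
      · exact absurd hlj.symm hjl
    · rw [if_neg hik]
      have hjk : (G.deleteEdges {e}).Reachable j k :=
        ((two_comp hc he hij k).resolve_left (fun hki => hik hki.symm)).symm
      have ejk : ccf G X m j e = ccf G X m k e := ccf_congr hjk
      by_cases hjl : (G.deleteEdges {e}).Reachable j l
      · have hkl : (G.deleteEdges {e}).Reachable k l := hjk.symm.trans hjl
        rw [if_pos hkl, if_pos hjl]
        linarith
      · rw [if_neg hjl]
        have hkl : ¬ (G.deleteEdges {e}).Reachable k l := fun hh => hjl (hjk.trans hh)
        rw [if_neg hkl]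
        linarith

lemma mem_subtree_iff (hT : G.IsTree) {R : Finset V} {x : V} (hx : x ∈ R)
    {e : Sym2 V} (he : e ∈ G.edgeFinset) :
    e ∈ subtreeEdges G R ↔ ∃ b ∈ R, ¬ (G.deleteEdges {e}).Reachable x b := by
  rw [subtreeEdges, Finset.mem_filter]
  have heS : e ∈ G.edgeSet := SimpleGraph.mem_edgeFinset.mp he
  constructor
  · rintro ⟨_, a, ha, b, hb, hab⟩
    rw [onPath_iff hT heS] at hab
    by_contra hcon
    push_neg at hcon
    exact hab ((hcon a ha).symm.trans (hcon b hb))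
  · rintro ⟨b, hb, hxb⟩
    exact ⟨he, x, hx, b, hb, (onPath_iff hT heS).mpr hxb⟩

lemma count_key (hT : G.IsTree) (X : Finset V) (m : ℕ) {x y : V}
    (hx : x ∈ X) (hy : y ∈ X) (hxy : x ≠ y)
    {e : Sym2 V} (he : e ∈ G.edgeFinset) :
    ((((X.erase x).erase y).powersetCard (m - 2)).filter
        (fun Y => e ∈ subtreeEdges G (insert x (insert y Y)))).card
      = (((X.card - 2).choose (m - 2) : ℝ)
        - (if (G.deleteEdges {e}).Reachable x y then ccf G X m x e else 0)) := by
  set B := (X.erase x).erase y with hB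
  set P := B.powersetCard (m - 2) with hP
  set L := leafSide G X x e with hL
  have hLX : L ⊆ X := Finset.filter_subset _ _
  have hBcard : B.card = X.card - 2 := by
    rw [hB, Finset.card_erase_of_mem (Finset.mem_erase.mpr ⟨hxy.symm, hy⟩),
        Finset.card_erase_of_mem hx, Nat.sub_sub]
  have hnot : ∀ Y ∈ P, (e ∉ subtreeEdges G (insert x (insert y Y))
      ↔ ((G.deleteEdges {e}).Reachable x y ∧ Y ⊆ L)) := by
    intro Y hY
    have hYB : Y ⊆ B := (Finset.mem_powersetCard.mp hY).1
    constructor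
    · intro hns
      have hall : ∀ b ∈ insert x (insert y Y), (G.deleteEdges {e}).Reachable x b := by
        intro b hb
        by_contra hc
        exact hns ((mem_subtree_iff hT (Finset.mem_insert_self x _) he).mpr ⟨b, hb, hc⟩)
      refine ⟨hall y (by simp), fun z hz => ?_⟩
      have hzX : z ∈ X := Finset.mem_of_mem_erase (Finset.mem_of_mem_erase (hYB hz))
      exact Finset.mem_filter.mpr ⟨hzX, hall z (by simp [hz])⟩
    · rintro ⟨hrxy, hYL⟩ hmem
      obtain ⟨b, hb, hnb⟩ := (mem_subtree_iff hT (Finset.mem_insert_self x _) he).mp hmem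
      rcases Finset.mem_insert.mp hb with rfl | hb'
      · exact hnb (Reachable.refl _)
      · rcases Finset.mem_insert.mp hb' with rfl | hb''
        · exact hnb hrxy
        · exact hnb (Finset.mem_filter.mp (hYL hb'')).2
  have hsplit := Finset.card_filter_add_card_filter_not
      (s := P) (p := fun Y => e ∈ subtreeEdges G (insert x (insert y Y)))
  have hPcard : P.card = (X.card - 2).choose (m - 2) := by
    rw [hP, Finset.card_powersetCard, hBcard]
  by_cases hreach : (G.deleteEdges {e}).Reachable x y
  · have hbad : (P.filter (fun Y => ¬ e ∈ subtreeEdges G (insert x (insert y Y)))).card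
        = (L.card - 2).choose (m - 2) := by
      have h1 : P.filter (fun Y => ¬ e ∈ subtreeEdges G (insert x (insert y Y)))
          = (B ∩ L).powersetCard (m - 2) := by
        ext Z
        simp only [Finset.mem_filter, hP, Finset.mem_powersetCard, Finset.subset_inter_iff]
        constructor
        · rintro ⟨⟨hZB, hZc⟩, hZn⟩
          exact ⟨⟨hZB, ((hnot Z (Finset.mem_powersetCard.mpr ⟨hZB, hZc⟩)).mp hZn).2⟩, hZc⟩
        · rintro ⟨⟨hZB, hZL⟩, hZc⟩
          exact ⟨⟨hZB, hZc⟩, (hnot Z (Finset.mem_powersetCard.mpr ⟨hZB, hZc⟩)).mpr ⟨hreach, hZL⟩⟩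
      have h2 : B ∩ L = (L.erase x).erase y := by
        ext z
        simp only [hB, hL, leafSide, Finset.mem_inter, Finset.mem_erase, Finset.mem_filter]
        tauto
      have hxL : x ∈ L := Finset.mem_filter.mpr ⟨hx, Reachable.refl _⟩
      have hyL : y ∈ L.erase x := Finset.mem_erase.mpr ⟨hxy.symm, Finset.mem_filter.mpr ⟨hy, hreach⟩⟩
      rw [h1, Finset.card_powersetCard, h2, Finset.card_erase_of_mem hyL,
          Finset.card_erase_of_mem hxL, Nat.sub_sub]
    have hle : (L.card - 2).choose (m - 2) ≤ (X.card - 2).choose (m - 2) :=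
      Nat.choose_le_choose _ (Nat.sub_le_sub_right (Finset.card_le_card hLX) 2)
    have hgood : (P.filter (fun Y => e ∈ subtreeEdges G (insert x (insert y Y)))).card
        = (X.card - 2).choose (m - 2) - (L.card - 2).choose (m - 2) := by
      omega
    rw [hgood, if_pos hreach, Nat.cast_sub hle]
    simp only [ccf, hL]
  · have hbad0 : (P.filter (fun Y => ¬ e ∈ subtreeEdges G (insert x (insert y Y)))).card = 0 := by
      rw [Finset.card_eq_zero, Finset.filter_eq_empty_iff]
      intro Y hY hcon
      exact hreach ((hnot Y hY).mp hcon).1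
    have hgood : (P.filter (fun Y => e ∈ subtreeEdges G (insert x (insert y Y)))).card
        = (X.card - 2).choose (m - 2) := by omega
    rw [hgood, if_neg hreach]
    ring

lemma SD_eq (hT : G.IsTree) (X : Finset V) (w : Sym2 V → ℝ) (m : ℕ)
    {x y : V} (hx : x ∈ X) (hy : y ∈ X) (hxy : x ≠ y) :
    SDmap G w X m x y = phif G X w m x + phif G X w m y + ddf G X w m x y := by
  have step1 : SDmap G w X m x y = ∑ e ∈ G.edgeFinset,
      ∑ Y ∈ ((X.erase x).erase y).powersetCard (m - 2),
        (if e ∈ subtreeEdges G (insert x (insert y Y)) then w e else 0) := by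
    simp only [SDmap]
    rw [← Finset.sum_comm]
    refine Finset.sum_congr rfl fun Y _ => ?_
    have hsub : subtreeEdges G (insert x (insert y Y)) ⊆ G.edgeFinset :=
      Finset.filter_subset _ _
    simp only [subtreeWeight]
    rw [← Finset.inter_eq_right.mpr hsub, ← Finset.sum_ite_mem]
    exact Finset.sum_congr rfl fun f hf => by simp [Finset.mem_inter, hf]
  rw [step1, phif, phif, ddf, ← Finset.sum_add_distrib, ← Finset.sum_add_distrib]
  refine Finset.sum_congr rfl fun e heE => ?_
  rw [← Finset.sum_filter, Finset.sum_const, nsmul_eq_mul, count_key hT X m hx hy hxy heE]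
  simp only [deltaf]
  by_cases hreach : (G.deleteEdges {e}).Reachable x y
  · rw [if_pos hreach, if_pos hreach, ccf_congr hreach]
    ring
  · rw [if_neg hreach, if_neg hreach]
    ring

lemma phif_nonneg (X : Finset V) {w : Sym2 V → ℝ} (hw : ∀ e ∈ G.edgeSet, 0 ≤ w e)
    (m : ℕ) (x : V) : 0 ≤ phif G X w m x := by
  refine Finset.sum_nonneg fun e heE => ?_
  refine mul_nonneg (hw e (SimpleGraph.mem_edgeFinset.mp heE)) ?_
  have := ccf_le (G := G) X m x e
  linarith

lemma ddf_add_le {w : Sym2 V → ℝ} (hw : ∀ e ∈ G.edgeSet, 0 ≤ w e)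
    {p q r s p' q' r' s' : V}
    (h : ∀ e ∈ G.edgeFinset, deltaf G X m p q e + deltaf G X m r s e
      ≤ deltaf G X m p' q' e + deltaf G X m r' s' e) :
    ddf G X w m p q + ddf G X w m r s ≤ ddf G X w m p' q' + ddf G X w m r' s' := by
  simp only [ddf]
  rw [← Finset.sum_add_distrib, ← Finset.sum_add_distrib]
  refine Finset.sum_le_sum fun e heE => ?_
  rw [← mul_add, ← mul_add]
  exact mul_le_mul_of_nonneg_left (h e heE) (hw e (SimpleGraph.mem_edgeFinset.mp heE))

lemma ddf_triangle {w : Sym2 V → ℝ} (hw : ∀ e ∈ G.edgeSet, 0 ≤ w e) (x y z : V) :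
    ddf G X w m x z ≤ ddf G X w m x y + ddf G X w m y z := by
  simp only [ddf]
  rw [← Finset.sum_add_distrib]
  refine Finset.sum_le_sum fun e heE => ?_
  rw [← mul_add]
  exact mul_le_mul_of_nonneg_left (deltaf_triangle x y z e)
    (hw e (SimpleGraph.mem_edgeFinset.mp heE))

lemma ddf_fourpoint (hT : G.IsTree) {w : Sym2 V → ℝ} (hw : ∀ e ∈ G.edgeSet, 0 ≤ w e)
    (i j k l : V) :
    ddf G X w m i j + ddf G X w m k l
      ≤ max (ddf G X w m i k + ddf G X w m j l) (ddf G X w m j k + ddf G X w m i l) := by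
  by_cases hex : ∃ e ∈ G.edgeFinset, ¬(G.deleteEdges {e}).Reachable i j ∧
      (G.deleteEdges {e}).Reachable i k ∧ (G.deleteEdges {e}).Reachable j l
  · obtain ⟨e0, he0, ht2⟩ := hex
    refine le_max_of_le_right (ddf_add_le hw fun f hfE => ?_)
    have hnT3 : ¬(¬(G.deleteEdges {f}).Reachable i j ∧ (G.deleteEdges {f}).Reachable i l ∧
        (G.deleteEdges {f}).Reachable j k) := fun ht3 =>
      incompat hT (SimpleGraph.mem_edgeFinset.mp he0) (SimpleGraph.mem_edgeFinset.mp hfE) ht2 ht3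
    have hca := claimA (X := X) (m := m) hT.isConnected
      (SimpleGraph.mem_edgeFinset.mp hfE) i j l k hnT3
    rw [deltaf_comm (G := G) (X := X) (m := m) l k] at hca
    linarith
  · refine le_max_of_le_left (ddf_add_le hw fun f hfE => ?_)
    exact claimA (X := X) (m := m) hT.isConnected (SimpleGraph.mem_edgeFinset.mp hfE) i j k l
      (fun hcon => hex ⟨f, hfE, hcon⟩)

lemma SDmap_nonneg {w : Sym2 V → ℝ} (hw : ∀ e ∈ G.edgeSet, 0 ≤ w e)
    (X : Finset V) (m : ℕ) (x y : V) : 0 ≤ SDmap G w X m x y := by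
  refine Finset.sum_nonneg fun Y _ => Finset.sum_nonneg fun e heE => ?_
  have : e ∈ G.edgeFinset := (Finset.mem_filter.mp heE).1
  exact hw e (SimpleGraph.mem_edgeFinset.mp this)

lemma SDmap_comm (w : Sym2 V → ℝ) (X : Finset V) (m : ℕ) (x y : V) :
    SDmap G w X m x y = SDmap G w X m y x := by
  simp only [SDmap]
  rw [Finset.erase_right_comm]
  exact Finset.sum_congr rfl fun Y _ => by rw [Finset.insert_comm]

end WithFintype

end SD4P

/-- `S_D` (with `S_D(i,i) = 0`) satisfies the four-point condition,
i.e. it is a tree metric. -/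
theorem SD_four_point_condition
    {V : Type*} [Fintype V] (G : SimpleGraph V) (X : Finset V)
    (hT : G.IsTree)
    (hleaf : ∀ v : V, G.degree v = 1 ↔ v ∈ X)
    (hint : ∀ v : V, v ∉ X → 3 ≤ G.degree v)
    (w : Sym2 V → ℝ) (hw : ∀ e ∈ G.edgeSet, 0 < w e)
    (m : ℕ) (hm : 2 ≤ m) (hmn : m ≤ X.card)
    -- `S` is `S_D`, extended by `S(i,i) = 0`
    (S : V → V → ℝ)
    (hS : ∀ i j : V, S i j = if i = j then 0 else SDmap G w X m i j)
    (i j k l : V) (hi : i ∈ X) (hj : j ∈ X) (hk : k ∈ X) (hl : l ∈ X) :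
    S i j + S k l ≤ max (S i k + S j l) (S j k + S i l) := by
  have hw0 : ∀ e ∈ G.edgeSet, 0 ≤ w e := fun e he => (hw e he).le
  have hSsymm : ∀ x y : V, S x y = S y x := by
    intro x y
    rw [hS, hS]
    by_cases h : x = y
    · subst h; rfl
    · rw [if_neg h, if_neg (Ne.symm h)]
      exact SD4P.SDmap_comm w X m x y
  have hSnn : ∀ x y : V, 0 ≤ S x y := by
    intro x y
    rw [hS]
    split
    · exact le_refl _
    · exact SD4P.SDmap_nonneg hw0 X m x y
  have hSzero : ∀ x : V, S x x = 0 := by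
    intro x; rw [hS, if_pos rfl]
  have hdec : ∀ x y : V, x ∈ X → y ∈ X → x ≠ y →
      S x y = SD4P.phif G X w m x + SD4P.phif G X w m y + SD4P.ddf G X w m x y := by
    intro x y hxX hyX hne
    rw [hS, if_neg hne]
    exact SD4P.SD_eq hT X w m hxX hyX hne
  have hphi : ∀ x : V, 0 ≤ SD4P.phif G X w m x := fun x => SD4P.phif_nonneg X hw0 m x
  have hStri : ∀ p q r : V, p ∈ X → q ∈ X → r ∈ X → S q r ≤ S q p + S p r := by
    intro p q r hp hq hr
    by_cases hqr : q = r
    · subst hqr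
      rw [hSzero]
      exact add_nonneg (hSnn q p) (hSnn p q)
    · by_cases hqp : q = p
      · subst hqp
        rw [hSzero]
        linarith [hSnn q r]
      · by_cases hpr : p = r
        · subst hpr
          rw [hSzero]
          linarith [hSnn q p]
        · rw [hdec q r hq hr hqr, hdec q p hq hp hqp, hdec p r hp hr hpr]
          have h1 := SD4P.ddf_triangle (G := G) (X := X) (m := m) hw0 q p r
          have h2 := hphi p
          linarith
  by_cases hij : i = j
  · subst hij
    rw [hSzero, max_self]
    have h1 := hStri i k l hi hk hl
    have h2 := hSsymm k i
    linarith
  · by_cases hkl : k = l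
    · subst hkl
      rw [hSzero]
      have h1 := hStri k i j hk hi hj
      have h2 := hSsymm k j
      have h3 := le_max_left (S i k + S j k) (S j k + S i k)
      linarith
    · by_cases hik : i = k
      · subst hik
        refine le_max_of_le_right ?_
        have := hSsymm j i
        linarith
      · by_cases hil : i = l
        · subst hil
          refine le_max_of_le_left ?_
          have h1 := hSsymm i k
          have h2 := hSsymm j i
          linarith
        · by_cases hjk : j = k
          · subst hjk
            exact le_max_left _ _
          · by_cases hjl : j = l
            · subst hjl
              refine le_max_of_le_right ?_
              have := hSsymm j k
              linarith
            · rw [hdec i j hi hj hij, hdec k l hk hl hkl, hdec i k hi hk hik,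
                  hdec j l hj hl hjl, hdec j k hj hk hjk, hdec i l hi hl hil]
              have h4 := SD4P.ddf_fourpoint (G := G) (X := X) (m := m) hT hw0 i j k l
              rcases le_max_iff.mp h4 with h | h
              · exact le_max_of_le_left (by linarith)
              · exact le_max_of_le_right (by linarith)
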